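/- For elements α and β of the semigroup 𝐈ℕ∞ the following are equivalent: (i) there exists an idempotent ε ∈ 𝐈ℕ∞ with εα = εβ (i.e. α and β are equivalent under the least group congruence 𝔠_mg); (ii) there exists n ∈ dom α ∩ dom β with α(n) = β(n); (iii) α(n) = β(n) for all n ∈ dom α ∩ dom β. -/

import Mathlib

/-- Partial transformations of the set ℕ of positive integers. -/
abbrev PMapN : Type := ℕ+ → Option ℕ+

/-- The domain of a partial transformation. -/
def pdom (f : PMapN) : Set ℕ+ := {n | f n ≠ none}

/-- The range of a partial transformation. -/
def pran (f : PMapN) : Set ℕ+ := {m | ∃ n, f n = some m}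

/-- Composition of partial transformations: `pmul f g` applies `g` first and then `f`. -/
def pmul (f g : PMapN) : PMapN := fun n => (g n).bind f

/-- The identity transformation 𝕀 of ℕ. -/
def pid : PMapN := fun n => some n

/-- `f` is a partial bijection (an injective partial map). -/
def IsPartialBij (f : PMapN) : Prop :=
  ∀ ⦃m n a⦄, f m = some a → f n = some a → m = n

/-- `f` is a partial isometry with respect to the metric `d(m, n) = |m - n|`. -/
def IsIsometry (f : PMapN) : Prop :=
  ∀ ⦃m n a b⦄, f m = some a → f n = some b →
    |((a : ℕ) : ℤ) - ((b : ℕ) : ℤ)| = |((m : ℕ) : ℤ) - ((n : ℕ) : ℤ)|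

/-- Membership in the inverse monoid `𝐈ℕ∞` of partial cofinite isometries of ℕ:
a partial bijection of ℕ with cofinite domain and cofinite range preserving distances. -/
def InIN (f : PMapN) : Prop :=
  IsPartialBij f ∧ (pdom f)ᶜ.Finite ∧ (pran f)ᶜ.Finite ∧ IsIsometry f

lemma pnat_le_finite (B : ℤ) : {p : ℕ+ | (p:ℤ) ≤ B}.Finite := by
  apply Set.Finite.of_finite_image (f := fun p : ℕ+ => (p:ℤ))
  · apply Set.Finite.subset (Set.finite_Icc 1 B)
    rintro x ⟨p, hp, rfl⟩
    refine ⟨?_, hp⟩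
    simp only []
    exact_mod_cast p.one_le
  · intro a _ b _ h
    simp only [] at h
    exact_mod_cast h

lemma InIN.key {f : PMapN} (hf : InIN f) {m n a b : ℕ+}
    (hm : f m = some a) (hn : f n = some b) :
    ((a:ℕ):ℤ) - ((m:ℕ):ℤ) = ((b:ℕ):ℤ) - ((n:ℕ):ℤ) := by
  obtain ⟨hinj, hdom, hran, hiso⟩ := hf
  obtain ⟨p, hp⟩ :=
    ((hdom.union (pnat_le_finite (((m:ℕ):ℤ) + ((a:ℕ):ℤ) + ((n:ℕ):ℤ) + ((b:ℕ):ℤ)))).infinite_compl).nonempty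
  rw [Set.mem_compl_iff, Set.mem_union] at hp
  push_neg at hp
  obtain ⟨hp1, hp2⟩ := hp
  rw [Set.mem_compl_iff, Set.not_notMem] at hp1
  obtain ⟨q, hq⟩ := Option.ne_none_iff_exists'.mp hp1
  simp only [Set.mem_setOf_eq, not_le] at hp2
  have h1 := hiso hq hm
  have h2 := hiso hq hn
  have hq1 : (1:ℤ) ≤ ((q:ℕ):ℤ) := by exact_mod_cast q.one_le
  have hm1 : (1:ℤ) ≤ ((m:ℕ):ℤ) := by exact_mod_cast m.one_le
  have hn1 : (1:ℤ) ≤ ((n:ℕ):ℤ) := by exact_mod_cast n.one_le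
  have ha1 : (1:ℤ) ≤ ((a:ℕ):ℤ) := by exact_mod_cast a.one_le
  have hb1 : (1:ℤ) ≤ ((b:ℕ):ℤ) := by exact_mod_cast b.one_le
  rcases abs_eq_abs.mp h1 with h1' | h1' <;> rcases abs_eq_abs.mp h2 with h2' | h2' <;>
    linarith

theorem stmt12 (α β : PMapN) (hα : InIN α) (hβ : InIN β) :
    List.TFAE [
      ∃ e, InIN e ∧ pmul e e = e ∧ pmul e α = pmul e β,
      ∃ n a, α n = some a ∧ β n = some a,
      ∀ n, n ∈ pdom α → n ∈ pdom β → α n = β n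
    ] := by
  classical
  tfae_have 1 → 2
  · rintro ⟨e, he, _hee, heq⟩
    -- the set of n whose α-image lies outside pdom e is finite
    have hCα : (α ⁻¹' (some '' (pdom e)ᶜ)).Finite := by
      apply Set.Finite.preimage ?_ (he.2.1.image some)
      rintro x hx y hy hxy
      obtain ⟨a, _, ha⟩ := hx
      exact hα.1 ha.symm (hxy ▸ ha.symm)
    obtain ⟨n, hn⟩ := ((hα.2.1.union hβ.2.1).union hCα).infinite_compl.nonempty
    rw [Set.mem_compl_iff, Set.mem_union, Set.mem_union] at hn
    push_neg at hn
    obtain ⟨⟨hn1, hn2⟩, hn3⟩ := hn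
    rw [Set.mem_compl_iff, Set.not_notMem] at hn1 hn2
    obtain ⟨a, ha⟩ := Option.ne_none_iff_exists'.mp hn1
    obtain ⟨b, hb⟩ := Option.ne_none_iff_exists'.mp hn2
    have hae : a ∈ pdom e := by
      by_contra hcon
      exact hn3 ⟨a, hcon, ha.symm⟩
    obtain ⟨x, hx⟩ := Option.ne_none_iff_exists'.mp hae
    have heqn : e a = e b := by
      have := congrFun heq n
      simpa [pmul, ha, hb] using this
    have hab : a = b := he.1 hx (heqn ▸ hx)
    exact ⟨n, a, ha, hab ▸ hb⟩
  tfae_have 2 → 3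
  · rintro ⟨n₀, a₀, hα₀, hβ₀⟩ n hnα hnβ
    obtain ⟨a, ha⟩ := Option.ne_none_iff_exists'.mp hnα
    obtain ⟨b, hb⟩ := Option.ne_none_iff_exists'.mp hnβ
    have h1 := hα.key ha hα₀
    have h2 := hβ.key hb hβ₀
    have : a = b := by
      have : ((a:ℕ):ℤ) = ((b:ℕ):ℤ) := by linarith
      exact_mod_cast this
    rw [ha, hb, this]
  tfae_have 3 → 1
  · intro h3
    -- a common domain point
    obtain ⟨n₀, hn₀⟩ := (hα.2.1.union hβ.2.1).infinite_compl.nonempty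
    rw [Set.mem_compl_iff, Set.mem_union] at hn₀
    push_neg at hn₀
    obtain ⟨hn₀α, hn₀β⟩ := hn₀
    rw [Set.mem_compl_iff, Set.not_notMem] at hn₀α hn₀β
    obtain ⟨a₀, ha₀⟩ := Option.ne_none_iff_exists'.mp hn₀α
    have hb₀ : β n₀ = some a₀ := by rw [← h3 n₀ hn₀α hn₀β]; exact ha₀
    set c : ℤ := ((a₀:ℕ):ℤ) - ((n₀:ℕ):ℤ) with hc
    have hvalα : ∀ ⦃n a⦄, α n = some a → ((a:ℕ):ℤ) = ((n:ℕ):ℤ) + c := by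
      intro n a h
      have := hα.key h ha₀
      linarith
    have hvalβ : ∀ ⦃n a⦄, β n = some a → ((a:ℕ):ℤ) = ((n:ℕ):ℤ) + c := by
      intro n a h
      have := hβ.key h hb₀
      linarith
    set e : PMapN := fun m =>
      if ∃ k, α k = some m ∧ β k = some m then some m else none with he_def
    have he_pos : ∀ m, (∃ k, α k = some m ∧ β k = some m) → e m = some m := by
      intro m hm
      simp [he_def, hm]
    have he_neg : ∀ m, ¬(∃ k, α k = some m ∧ β k = some m) → e m = none := by
      intro m hm
      simp [he_def, hm]
    have he_some : ∀ ⦃m x⦄, e m = some x →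
        x = m ∧ ∃ k, α k = some m ∧ β k = some m := by
      intro m x h
      by_cases hm : ∃ k, α k = some m ∧ β k = some m
      · rw [he_pos m hm] at h
        exact ⟨(Option.some_injective _ h).symm, hm⟩
      · rw [he_neg m hm] at h
        exact absurd h (by simp)
    -- domain of e is cofinite
    have hdome : (pdom e)ᶜ.Finite := by
      have hT : {m : ℕ+ | ∃ k : ℕ+, ((k:ℕ):ℤ) = ((m:ℕ):ℤ) - c ∧
          (α k = none ∨ β k = none)}.Finite := by
        apply Set.Finite.of_finite_image (f := fun m : ℕ+ => ((m:ℕ):ℤ))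
        · apply Set.Finite.subset
            (((hα.2.1.union hβ.2.1).image (fun k : ℕ+ => ((k:ℕ):ℤ) + c)))
          rintro x ⟨m, ⟨k, hk1, hk2⟩, rfl⟩
          refine ⟨k, ?_, by simp only []; linarith⟩
          rw [Set.mem_union, Set.mem_compl_iff, Set.mem_compl_iff]
          rcases hk2 with h | h
          · exact Or.inl (by simp [pdom, h])
          · exact Or.inr (by simp [pdom, h])
        · intro a _ b _ h
          simp only [] at h
          exact_mod_cast h
      apply Set.Finite.subset ((pnat_le_finite c).union hT)
      intro m hm
      rw [Set.mem_compl_iff] at hm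
      simp only [pdom, Set.mem_setOf_eq, not_not] at hm
      by_cases hmc : ((m:ℕ):ℤ) ≤ c
      · exact Or.inl hmc
      · push_neg at hmc
        right
        have hpos : 0 < ((m:ℕ):ℤ) - c := by linarith
        set kN : ℕ := (((m:ℕ):ℤ) - c).toNat with hkN
        have hkNpos : 0 < kN := by omega
        set k : ℕ+ := ⟨kN, hkNpos⟩ with hk
        have hkval : ((k:ℕ):ℤ) = ((m:ℕ):ℤ) - c := by
          simp [hk, hkN]
          omega
        refine ⟨k, hkval, ?_⟩
        by_contra hcon
        push_neg at hcon
        obtain ⟨a, ha⟩ := Option.ne_none_iff_exists'.mp hcon.1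
        obtain ⟨b, hb⟩ := Option.ne_none_iff_exists'.mp hcon.2
        have h1 : a = m := by
          have := hvalα ha
          have : ((a:ℕ):ℤ) = ((m:ℕ):ℤ) := by linarith
          exact_mod_cast this
        have h2 : b = m := by
          have := hvalβ hb
          have : ((b:ℕ):ℤ) = ((m:ℕ):ℤ) := by linarith
          exact_mod_cast this
        have : e m = some m := he_pos m ⟨k, h1 ▸ ha, h2 ▸ hb⟩
        rw [hm] at this
        exact nomatch this
    refine ⟨e, ⟨?_, hdome, ?_, ?_⟩, ?_, ?_⟩
    · -- partial bijection
      intro m n x hm hn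
      rw [(he_some hm).1] at hn
      exact (he_some hn).1
    · -- cofinite range
      apply Set.Finite.subset hdome
      intro m hm
      rw [Set.mem_compl_iff] at hm ⊢
      intro hcon
      obtain ⟨x, hx⟩ := Option.ne_none_iff_exists'.mp hcon
      have := (he_some hx).1
      exact hm ⟨m, this ▸ hx⟩
    · -- isometry
      intro m n x y hm hn
      rw [(he_some hm).1, (he_some hn).1]
    · -- idempotent
      funext m
      by_cases hm : ∃ k, α k = some m ∧ β k = some m
      · have := he_pos m hm
        simp [pmul, this]
      · have := he_neg m hm
        simp [pmul, this]
    · -- pmul e α = pmul e β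
      funext n
      rcases hA : α n with _ | a <;> rcases hB : β n with _ | b
      · simp [pmul, hA, hB]
      · have : e b = none := by
          apply he_neg
          rintro ⟨k, hk1, hk2⟩
          have := hβ.1 hk2 hB
          rw [this] at hk1
          rw [hk1] at hA
          exact nomatch hA
        simp [pmul, hA, hB, this]
      · have : e a = none := by
          apply he_neg
          rintro ⟨k, hk1, hk2⟩
          have := hα.1 hk1 hA
          rw [this] at hk2
          rw [hk2] at hB
          exact nomatch hB
        simp [pmul, hA, hB, this]
      · have hab : a = b := by
          have := h3 n (by simp [pdom, hA]) (by simp [pdom, hB])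
          rw [hA, hB] at this
          exact Option.some_injective _ this
        have : e a = some a := he_pos a ⟨n, hA, hab ▸ hB⟩
        simp [pmul, hA, hB, ← hab, this]
  tfae_finish
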